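/- Let d > 1 be an integer, K, T positive integers, η > 0, c > 0, V₁, …, V_K > 0 with V = ∑_k V_k, and a : {1,…,T} → {1,…,K} an action sequence with N_t = #{s ≤ t : a_s = a_t}. If the instantaneous regrets satisfy 0 ≤ R_t ≤ 2η·(c·V_{a_t}/N_t)^{1/d} for every t, then the cumulative regret satisfies ∑_{t=1}^{T} R_t ≤ (2ηd/(d−1)) · c^{1/d} · V^{1/d} · T^{(d−1)/d}. -/

import Mathlib

open Finset

/-- Key concavity step: `n^q ≤ (n+1)^q - q (n+1)^(q-1)` for `0 < q < 1`. -/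
lemma aux_concave_step (q : ℝ) (hq0 : 0 < q) (hq1 : q < 1) (n : ℕ) :
    (n : ℝ) ^ q + q * ((n : ℝ) + 1) ^ (q - 1) ≤ ((n : ℝ) + 1) ^ q := by
  have hN : (0:ℝ) < (n : ℝ) + 1 := by positivity
  have hs : (-1 : ℝ) ≤ -(1 / ((n:ℝ) + 1)) := by
    rw [neg_le_neg_iff]
    rw [div_le_one hN]
    linarith [Nat.cast_nonneg (α := ℝ) n]
  have hB := rpow_one_add_le_one_add_mul_self hs hq0.le hq1.le
  -- (1 - 1/(n+1))^q ≤ 1 - q/(n+1)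
  have h1 : (1 : ℝ) + -(1 / ((n:ℝ) + 1)) = (n:ℝ) / ((n:ℝ)+1) := by
    field_simp
    ring
  rw [h1] at hB
  have h2 : ((n:ℝ) / ((n:ℝ)+1)) ^ q = (n:ℝ)^q / ((n:ℝ)+1)^q := by
    rw [Real.div_rpow (Nat.cast_nonneg n) hN.le]
  rw [h2] at hB
  have hNq : (0:ℝ) < ((n:ℝ)+1) ^ q := Real.rpow_pos_of_pos hN q
  have hB' : (n:ℝ)^q ≤ (1 + q * -(1 / ((n:ℝ)+1))) * ((n:ℝ)+1)^q := by
    rw [← div_le_iff₀ hNq] at *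
    exact hB
  have h3 : (1 + q * -(1 / ((n:ℝ)+1))) * ((n:ℝ)+1)^q
      = ((n:ℝ)+1)^q - q * (((n:ℝ)+1)^q / ((n:ℝ)+1)) := by ring
  have h4 : ((n:ℝ)+1)^q / ((n:ℝ)+1) = ((n:ℝ)+1) ^ (q - 1) := by
    rw [Real.rpow_sub hN, Real.rpow_one]
  rw [h3, h4] at hB'
  linarith

/-- `∑_{j=1}^n j^{-p} ≤ n^{1-p} / (1-p)` for `0 < p < 1`. -/
lemma aux_sum_rpow (p : ℝ) (hp0 : 0 < p) (hp1 : p < 1) (n : ℕ) :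
    ∑ j ∈ Finset.Icc 1 n, (j : ℝ) ^ (-p) ≤ (n : ℝ) ^ (1 - p) / (1 - p) := by
  induction n with
  | zero => simp [Real.zero_rpow (by linarith : (1:ℝ) - p ≠ 0)]
  | succ n ih =>
    rw [Finset.sum_Icc_succ_top (by omega : 1 ≤ n + 1)]
    have hq0 : (0:ℝ) < 1 - p := by linarith
    have key := aux_concave_step (1 - p) hq0 (by linarith) n
    have hcast : ((n+1 : ℕ) : ℝ) = (n:ℝ) + 1 := by push_cast; ring
    have h5 : ((n+1 : ℕ) : ℝ) ^ (-p) = ((n:ℝ)+1) ^ ((1 - p) - 1) := by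
      rw [hcast]; norm_num
    rw [h5, hcast]
    have : (n:ℝ) ^ (1-p) / (1-p) + ((n:ℝ)+1) ^ ((1-p)-1) ≤ ((n:ℝ)+1)^(1-p) / (1-p) := by
      rw [div_add' _ _ _ hq0.ne', div_le_div_iff_of_pos_right hq0]
      nlinarith
    linarith

/-- Deterministic core of the cumulative regret bound: if at each step the instantaneous
regret satisfies `0 ≤ R_t ≤ 2η (c V_{a_t} / N_t)^{1/d}` where `N_t` is the number of pulls
of arm `a_t` up to and including time `t`, then
`∑_t R_t ≤ (2ηd/(d-1)) c^{1/d} V^{1/d} T^{(d-1)/d}` with `V = ∑_k V_k`. -/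
theorem cumulative_regret_bound (d : ℕ) (hd : 1 < d) (K T : ℕ) (hK : 0 < K) (hT : 0 < T)
    (η c : ℝ) (hη : 0 < η) (hc : 0 < c) (V : Fin K → ℝ) (hV : ∀ k, 0 < V k)
    (a : Fin T → Fin K) (R : Fin T → ℝ)
    (hR : ∀ t : Fin T, 0 ≤ R t ∧
      R t ≤ 2 * η * (c * V (a t) /
        (({s : Fin T | s ≤ t ∧ a s = a t} : Finset (Fin T)).card : ℝ)) ^ (1 / (d : ℝ))) :
    ∑ t : Fin T, R t ≤
      (2 * η * (d : ℝ) / ((d : ℝ) - 1)) * c ^ (1 / (d : ℝ)) *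
        (∑ k : Fin K, V k) ^ (1 / (d : ℝ)) * (T : ℝ) ^ (((d : ℝ) - 1) / (d : ℝ)) := by
  have hd1 : (1:ℝ) < (d:ℝ) := by exact_mod_cast hd
  have hdpos : (0:ℝ) < (d:ℝ) := by linarith
  set p : ℝ := 1 / (d:ℝ) with hp_def
  have hp0 : 0 < p := by positivity
  have hp1 : p < 1 := by rw [hp_def, div_lt_one hdpos]; exact hd1
  -- Number of pulls of the arm of t up to time t
  set N : Fin T → ℕ := fun t => ({s : Fin T | s ≤ t ∧ a s = a t} : Finset (Fin T)).card with hN_def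
  -- Number of pulls of arm k overall
  set n : Fin K → ℕ := fun k => (Finset.univ.filter (fun t => a t = k)).card with hn_def
  -- basic facts about N
  have hNmem : ∀ t : Fin T, t ∈ ({s : Fin T | s ≤ t ∧ a s = a t} : Finset (Fin T)) := by
    intro t; simp
  have hN1 : ∀ t, 1 ≤ N t := by
    intro t; exact Finset.card_pos.mpr ⟨t, hNmem t⟩
  have hNle : ∀ t, N t ≤ n (a t) := by
    intro t
    apply Finset.card_le_card
    intro s hs
    simp only [Finset.mem_filter, Finset.mem_univ, true_and, Set.mem_setOf_eq] at *
    exact hs.2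
  -- N is strictly monotone along the pulls of a fixed arm
  have hNinj : ∀ s t : Fin T, a s = a t → N s = N t → s = t := by
    intro s t hast hN
    by_contra hne
    rcases lt_or_gt_of_ne hne with h | h
    · have : N s < N t := by
        apply Finset.card_lt_card
        constructor
        · intro u hu
          simp only [Finset.mem_filter, Finset.mem_univ, true_and, Set.mem_setOf_eq] at *
          exact ⟨hu.1.trans h.le, hu.2.trans hast⟩
        · intro hsub
          have := hsub (hNmem t)
          simp only [Finset.mem_filter, Finset.mem_univ, true_and, Set.mem_setOf_eq] at this
          exact absurd this.1 (not_le.mpr h)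
      omega
    · have : N t < N s := by
        apply Finset.card_lt_card
        constructor
        · intro u hu
          simp only [Finset.mem_filter, Finset.mem_univ, true_and, Set.mem_setOf_eq] at *
          exact ⟨hu.1.trans h.le, hu.2.trans hast.symm⟩
        · intro hsub
          have := hsub (hNmem s)
          simp only [Finset.mem_filter, Finset.mem_univ, true_and, Set.mem_setOf_eq] at this
          exact absurd this.1 (not_le.mpr h)
      omega
  -- per-arm bound
  have harm : ∀ k : Fin K,
      ∑ t ∈ Finset.univ.filter (fun t => a t = k), R t
        ≤ 2 * η * (c * V k) ^ p * ((n k : ℝ) ^ (1 - p) / (1 - p)) := by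
    intro k
    have step1 : ∑ t ∈ Finset.univ.filter (fun t => a t = k), R t
        ≤ ∑ t ∈ Finset.univ.filter (fun t => a t = k),
            2 * η * (c * V k) ^ p * ((N t : ℝ)) ^ (-p) := by
      apply Finset.sum_le_sum
      intro t ht
      simp only [Finset.mem_filter, Finset.mem_univ, true_and] at ht
      have h2 : R t ≤ 2 * η * (c * V (a t) / (N t : ℝ)) ^ p := (hR t).2
      rw [ht] at h2
      have hNpos : (0:ℝ) < (N t : ℝ) := by exact_mod_cast hN1 t
      have : (c * V k / (N t : ℝ)) ^ p = (c * V k) ^ p * ((N t : ℝ)) ^ (-p) := by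
        rw [Real.div_rpow (mul_pos hc (hV k)).le hNpos.le, Real.rpow_neg hNpos.le,
          div_eq_mul_inv]
      calc R t ≤ 2 * η * (c * V k / (N t : ℝ)) ^ p := h2
        _ = 2 * η * (c * V k) ^ p * ((N t : ℝ)) ^ (-p) := by rw [this]; ring
    have step2 : ∑ t ∈ Finset.univ.filter (fun t => a t = k), ((N t : ℝ)) ^ (-p)
        ≤ ∑ j ∈ Finset.Icc 1 (n k), (j : ℝ) ^ (-p) := by
      have hinj : ∀ s ∈ Finset.univ.filter (fun t => a t = k),
          ∀ t ∈ Finset.univ.filter (fun t => a t = k), N s = N t → s = t := by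
        intro s hs t ht hst
        simp only [Finset.mem_filter, Finset.mem_univ, true_and] at hs ht
        exact hNinj s t (hs.trans ht.symm) hst
      have himg : ∑ t ∈ Finset.univ.filter (fun t => a t = k), ((N t : ℝ)) ^ (-p)
          = ∑ j ∈ (Finset.univ.filter (fun t => a t = k)).image N, ((j:ℝ)) ^ (-p) :=
        (Finset.sum_image (f := fun j : ℕ => (j:ℝ) ^ (-p)) (g := N) hinj).symm
      rw [himg]
      apply Finset.sum_le_sum_of_subset_of_nonneg
      · intro j hj
        simp only [Finset.mem_image, Finset.mem_filter, Finset.mem_univ, true_and] at hj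
        rcases hj with ⟨t, hat, rfl⟩
        rw [Finset.mem_Icc]
        exact ⟨hN1 t, by rw [← hat]; exact hNle t⟩
      · intro j _ _
        positivity
    calc ∑ t ∈ Finset.univ.filter (fun t => a t = k), R t
        ≤ ∑ t ∈ Finset.univ.filter (fun t => a t = k),
            2 * η * (c * V k) ^ p * ((N t : ℝ)) ^ (-p) := step1
      _ = 2 * η * (c * V k) ^ p *
            ∑ t ∈ Finset.univ.filter (fun t => a t = k), ((N t : ℝ)) ^ (-p) := by
          rw [Finset.mul_sum]
      _ ≤ 2 * η * (c * V k) ^ p * ∑ j ∈ Finset.Icc 1 (n k), (j : ℝ) ^ (-p) := by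
          apply mul_le_mul_of_nonneg_left step2
          exact mul_nonneg (by positivity) (Real.rpow_nonneg (mul_pos hc (hV k)).le p)
      _ ≤ 2 * η * (c * V k) ^ p * ((n k : ℝ) ^ (1 - p) / (1 - p)) := by
          apply mul_le_mul_of_nonneg_left (aux_sum_rpow p hp0 hp1 (n k))
          exact mul_nonneg (by positivity) (Real.rpow_nonneg (mul_pos hc (hV k)).le p)
  -- sum over arms
  have hfib : ∑ t : Fin T, R t
      = ∑ k : Fin K, ∑ t ∈ Finset.univ.filter (fun t => a t = k), R t :=
    (Finset.sum_fiberwise_of_maps_to (fun t _ => Finset.mem_univ (a t)) R).symm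
  have hcard : ∑ k : Fin K, (n k : ℝ) = (T : ℝ) := by
    have := Finset.card_eq_sum_card_fiberwise (f := a) (s := Finset.univ) (t := Finset.univ)
      (fun t _ => Finset.mem_univ (a t))
    simp only [Finset.card_univ, Fintype.card_fin] at this
    rw [hn_def]
    exact_mod_cast this.symm
  -- Hölder
  have hpq : Real.HolderConjugate (d:ℝ) ((d:ℝ)/((d:ℝ)-1)) := by
    refine Real.holderConjugate_iff.mpr ⟨?_, ?_⟩
    · exact hd1
    · field_simp; ring
  have hholder : ∑ k : Fin K, (V k) ^ p * (n k : ℝ) ^ (1 - p)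
      ≤ (∑ k : Fin K, V k) ^ p * (T : ℝ) ^ (1 - p) := by
    have H := Real.inner_le_Lp_mul_Lq_of_nonneg (s := Finset.univ)
      (f := fun k => (V k) ^ p) (g := fun k => (n k : ℝ) ^ (1 - p)) hpq
      (fun k _ => Real.rpow_nonneg (hV k).le p) (fun k _ => Real.rpow_nonneg (Nat.cast_nonneg _) _)
    have hdne : (d:ℝ) ≠ 0 := hdpos.ne'
    have hd1ne : (d:ℝ) - 1 ≠ 0 := by linarith
    have e1 : ∀ k : Fin K, ((V k) ^ p) ^ (d:ℝ) = V k := by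
      intro k
      rw [← Real.rpow_mul (hV k).le]
      have : p * (d:ℝ) = 1 := by rw [hp_def]; field_simp
      rw [this, Real.rpow_one]
    have e2 : ∀ k : Fin K, ((n k : ℝ) ^ (1 - p)) ^ ((d:ℝ)/((d:ℝ)-1)) = (n k : ℝ) := by
      intro k
      rw [← Real.rpow_mul (Nat.cast_nonneg _)]
      have : (1 - p) * ((d:ℝ)/((d:ℝ)-1)) = 1 := by
        rw [hp_def]
        field_simp
      rw [this, Real.rpow_one]
    simp only [e1, e2] at H
    rw [hcard] at H
    have e3 : 1 / ((d:ℝ)/((d:ℝ)-1)) = 1 - p := by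
      rw [hp_def]; field_simp
    rw [e3, hp_def] at H
    exact H
  -- put everything together
  have hfinal : ∑ t : Fin T, R t
      ≤ 2 * η * c ^ p / (1 - p) * ∑ k : Fin K, (V k) ^ p * (n k : ℝ) ^ (1 - p) := by
    rw [hfib, Finset.mul_sum]
    apply Finset.sum_le_sum
    intro k _
    refine (harm k).trans (le_of_eq ?_)
    rw [Real.mul_rpow hc.le (hV k).le]
    field_simp
  have h1p : (1:ℝ) - p = ((d:ℝ)-1)/(d:ℝ) := by
    rw [hp_def]; field_simp
  have hconst : 2 * η * c ^ p / (1 - p) = 2 * η * (d:ℝ) / ((d:ℝ)-1) * c ^ p := by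
    rw [h1p]
    field_simp
  calc ∑ t : Fin T, R t
      ≤ 2 * η * c ^ p / (1 - p) * ∑ k : Fin K, (V k) ^ p * (n k : ℝ) ^ (1 - p) := hfinal
    _ ≤ 2 * η * c ^ p / (1 - p) * ((∑ k : Fin K, V k) ^ p * (T : ℝ) ^ (1 - p)) := by
        apply mul_le_mul_of_nonneg_left hholder
        have : (0:ℝ) < 1 - p := by linarith
        positivity
    _ = (2 * η * (d : ℝ) / ((d : ℝ) - 1)) * c ^ p *
          (∑ k : Fin K, V k) ^ p * (T : ℝ) ^ (((d:ℝ)-1)/(d:ℝ)) := by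
        rw [hconst, h1p]; ring
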